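/- arXiv:2510.18274 — 8 statements merged into one kernel-verified Lean document; each statement's English description precedes it below -/
import Mathlib

section
/- Let F = (V, E) be a directed acyclic graph on n vertices with positive integer edge weights whose edge multiset can be partitioned into f directed s–t paths (a non-circular flow of value f), and suppose every edge weight is at most W. Then the total weight of F satisfies w(F) ≤ C·n·√(f·W) for some universal constant C. -/
/-- The list of consecutive (directed) edges of a walk given by its vertex list. -/
def walkEdges {V : Type*} (l : List V) : List (V × V) := l.zip l.tail

lemma walkEdges_cons_cons {V : Type*} (a b : V) (l : List V) :
    walkEdges (a :: b :: l) = (a, b) :: walkEdges (b :: l) := rfl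

lemma walkEdges_telescope {V : Type*} (g : V → ℤ) :
    ∀ (l : List V) (a b : V), l.head? = some a → l.getLast? = some b →
      ((walkEdges l).map (fun p => g p.2 - g p.1)).sum = g b - g a := by
  intro l
  induction l with
  | nil => intro a b ha _; simp at ha
  | cons x l ih =>
    intro a b ha hb
    simp only [List.head?_cons, Option.some.injEq] at ha
    subst ha
    cases l with
    | nil =>
      simp only [List.getLast?_singleton, Option.some.injEq] at hb
      subst hb
      simp [walkEdges]
    | cons y l =>
      rw [List.getLast?_cons_cons] at hb
      rw [walkEdges_cons_cons, List.map_cons, List.sum_cons, ih y b rfl hb]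
      ring

lemma sum_count_mul {α : Type*} [DecidableEq α] [BEq α] [LawfulBEq α] (E : Finset α) :
    ∀ (l : List α), (∀ p ∈ l, p ∈ E) → ∀ (h : α → ℤ),
      ∑ e ∈ E, (l.count e : ℤ) * h e = (l.map h).sum := by
  intro l
  induction l with
  | nil => intro _ h; simp
  | cons a l ih =>
    intro hl h
    have ha : a ∈ E := hl a List.mem_cons_self
    have hstep : ∀ e ∈ E, ((a :: l).count e : ℤ) * h e
        = (l.count e : ℤ) * h e + (if e = a then h e else 0) := by
      intro e _
      by_cases hea : e = a
      · subst hea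
        rw [List.count_cons_self, if_pos rfl]
        push_cast
        ring
      · rw [List.count_cons_of_ne (Ne.symm hea), if_neg hea]
        ring
    calc ∑ e ∈ E, ((a :: l).count e : ℤ) * h e
        = ∑ e ∈ E, ((l.count e : ℤ) * h e + (if e = a then h e else 0)) :=
          Finset.sum_congr rfl hstep
      _ = (∑ e ∈ E, (l.count e : ℤ) * h e) + ∑ e ∈ E, (if e = a then h e else 0) :=
          Finset.sum_add_distrib
      _ = (l.map h).sum + h a := by
          rw [ih (fun p hp => hl p (List.mem_cons_of_mem a hp)) h,
            Finset.sum_ite_eq' E a h, if_pos ha]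
      _ = ((a :: l).map h).sum := by simp [add_comm]

/-- If a directed acyclic graph `E` on `n` vertices with positive integer
edge weights bounded by `W` has its weighted edge multiset exactly decomposed into `f`
directed `s`–`t` paths, then its total weight is at most `C · n · √(f·W)` for a universal
constant `C`. -/
theorem flow_cover_weighted :
    ∃ C : ℝ, 0 < C ∧
      ∀ (n f W : ℕ) (E : Finset (Fin n × Fin n)) (w : Fin n × Fin n → ℕ)
        (s t : Fin n) (φ : Fin n → ℕ) (paths : Fin f → List (Fin n)),
        (∀ p ∈ E, φ p.1 < φ p.2) →
        (∀ p ∈ E, 1 ≤ w p ∧ w p ≤ W) →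
        (∀ i, (paths i).head? = some s ∧ (paths i).getLast? = some t) →
        (∀ i, ∀ p ∈ walkEdges (paths i), p ∈ E) →
        (∀ p ∈ E, w p = ∑ i, (walkEdges (paths i)).count p) →
        (∑ p ∈ E, (w p : ℝ)) ≤ C * n * Real.sqrt ((f : ℝ) * W) := by
  classical
  refine ⟨3, by norm_num, ?_⟩
  intro n f W E w s t φ paths hφ hw hpath hpathE hcount
  -- an injective rank function compatible with φ
  set ψ : Fin n → ℕ := fun v =>
    (Finset.univ.filter (fun u => φ u < φ v ∨ (φ u = φ v ∧ u < v))).card with hψ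
  have hψmono : ∀ u v : Fin n, (φ u < φ v ∨ (φ u = φ v ∧ u < v)) → ψ u < ψ v := by
    intro u v huv
    apply Finset.card_lt_card
    constructor
    · intro a ha
      simp only [Finset.mem_filter, Finset.mem_univ, true_and] at ha ⊢
      rcases ha with h | ⟨h1, h2⟩ <;> rcases huv with h' | ⟨h1', h2'⟩
      · left; omega
      · left; omega
      · left; omega
      · exact Or.inr ⟨h1.trans h1', h2.trans h2'⟩
    · intro hsub
      have hu := hsub (Finset.mem_filter.mpr ⟨Finset.mem_univ u, huv⟩)
      rcases (Finset.mem_filter.mp hu).2 with h | ⟨h1, h2⟩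
      · omega
      · exact absurd h2 (lt_irrefl u)
  have hψinj : Function.Injective ψ := by
    intro u v huv
    by_contra hne
    rcases lt_trichotomy (φ u) (φ v) with h | h | h
    · exact absurd huv (Nat.ne_of_lt (hψmono u v (Or.inl h)))
    · rcases lt_trichotomy u v with h' | h' | h'
      · exact absurd huv (Nat.ne_of_lt (hψmono u v (Or.inr ⟨h, h'⟩)))
      · exact hne h'
      · exact absurd huv.symm (Nat.ne_of_lt (hψmono v u (Or.inr ⟨h.symm, h'⟩)))
    · exact absurd huv.symm (Nat.ne_of_lt (hψmono v u (Or.inl h)))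
  have hψlt : ∀ v, ψ v < n := by
    intro v
    have h1 : (Finset.univ.filter (fun u => φ u < φ v ∨ (φ u = φ v ∧ u < v)))
        ⊆ Finset.univ.erase v := by
      intro a ha
      simp only [Finset.mem_filter, Finset.mem_univ, true_and] at ha
      refine Finset.mem_erase.mpr ⟨?_, Finset.mem_univ a⟩
      rintro rfl
      rcases ha with h | ⟨_, h⟩ <;> exact absurd h (lt_irrefl _)
    calc ψ v ≤ (Finset.univ.erase v).card := Finset.card_le_card h1
      _ < Finset.univ.card := Finset.card_erase_lt_of_mem (Finset.mem_univ v)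
      _ = n := by simp
  have hE : ∀ e ∈ E, ψ e.1 < ψ e.2 := fun e he => hψmono _ _ (Or.inl (hφ e he))
  -- the key identity
  have KEY : ∑ e ∈ E, (w e : ℤ) * ((ψ e.2 : ℤ) - ψ e.1)
      = (f : ℤ) * ((ψ t : ℤ) - ψ s) := by
    have h1 : ∀ e ∈ E, (w e : ℤ) = ∑ i, ((walkEdges (paths i)).count e : ℤ) := by
      intro e he
      rw [hcount e he]; push_cast; ring
    calc ∑ e ∈ E, (w e : ℤ) * ((ψ e.2 : ℤ) - ψ e.1)
        = ∑ e ∈ E, ∑ i, ((walkEdges (paths i)).count e : ℤ) * ((ψ e.2 : ℤ) - ψ e.1) := by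
          refine Finset.sum_congr rfl fun e he => ?_
          rw [h1 e he, Finset.sum_mul]
      _ = ∑ i, ∑ e ∈ E, ((walkEdges (paths i)).count e : ℤ) * ((ψ e.2 : ℤ) - ψ e.1) :=
          Finset.sum_comm
      _ = ∑ i : Fin f, ((walkEdges (paths i)).map (fun p => (ψ p.2 : ℤ) - ψ p.1)).sum := by
          refine Finset.sum_congr rfl fun i _ => ?_
          exact sum_count_mul E _ (hpathE i) (fun p => (ψ p.2 : ℤ) - ψ p.1)
      _ = ∑ _i : Fin f, ((ψ t : ℤ) - ψ s) := by
          refine Finset.sum_congr rfl fun i _ => ?_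
          exact walkEdges_telescope (fun v => (ψ v : ℤ)) (paths i) s t (hpath i).1 (hpath i).2
      _ = (f : ℤ) * ((ψ t : ℤ) - ψ s) := by
          simp [Finset.sum_const, Finset.card_univ]
          ring
  have KEYLE : ∑ e ∈ E, (w e : ℤ) * ((ψ e.2 : ℤ) - ψ e.1) ≤ (f : ℤ) * n := by
    rw [KEY]
    have h1 : ((ψ t : ℤ) - ψ s) ≤ n := by
      have := hψlt t
      omega
    have : (0:ℤ) ≤ f := by positivity
    nlinarith
  have hrnn : (0:ℝ) ≤ Real.sqrt ((f : ℝ) * W) := Real.sqrt_nonneg _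
  have hnnn : (0:ℝ) ≤ (n:ℝ) := by positivity
  by_cases hfW : f ≤ W
  · -- small f case: total ≤ f * n ≤ n √(fW)
    have h1 : ∑ e ∈ E, (w e : ℤ) ≤ (f : ℤ) * n := by
      refine le_trans (Finset.sum_le_sum fun e he => ?_) KEYLE
      have h2 := hE e he
      have h3 : (1:ℤ) ≤ (ψ e.2 : ℤ) - ψ e.1 := by omega
      nlinarith [Int.ofNat_nonneg (w e)]
    have h2 : (∑ e ∈ E, (w e : ℝ)) ≤ (f:ℝ) * n := by exact_mod_cast h1
    have h3 : (f:ℝ) ≤ Real.sqrt ((f : ℝ) * W) := by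
      apply Real.le_sqrt_of_sq_le
      have h4 : (f:ℝ) ≤ W := by exact_mod_cast hfW
      nlinarith [show (0:ℝ) ≤ (f:ℝ) by positivity]
    have h4 : (f:ℝ) * n ≤ Real.sqrt ((f:ℝ) * W) * n :=
      mul_le_mul_of_nonneg_right h3 hnnn
    have h5 : (0:ℝ) ≤ (n:ℝ) * Real.sqrt ((f:ℝ) * W) := mul_nonneg hnnn hrnn
    linarith
  · push_neg at hfW
    by_cases hW0 : W = 0
    · have hEe : E = ∅ := by
        refine Finset.eq_empty_iff_forall_notMem.mpr fun p hp => ?_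
        have := hw p hp
        omega
      rw [hEe]
      simp
      positivity
    have hW1 : 1 ≤ W := Nat.one_le_iff_ne_zero.mpr hW0
    set k : ℕ := Nat.sqrt (f / W) with hk
    have hk1 : 1 ≤ k := by
      have h1 : 1 ≤ f / W := (Nat.one_le_div_iff (by omega)).mpr (le_of_lt hfW)
      calc 1 = Nat.sqrt 1 := by simp
        _ ≤ Nat.sqrt (f / W) := Nat.sqrt_le_sqrt h1
    set E1 := E.filter (fun e => ψ e.2 ≤ ψ e.1 + k) with hE1def
    set E2 := E.filter (fun e => ¬ (ψ e.2 ≤ ψ e.1 + k)) with hE2def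
    have hsplit : (∑ p ∈ E, (w p : ℝ)) = (∑ p ∈ E1, (w p : ℝ)) + ∑ p ∈ E2, (w p : ℝ) :=
      (Finset.sum_filter_add_sum_filter_not E _ _).symm
    -- card bound on E1
    have hcard : E1.card ≤ n * k := by
      have := Finset.card_le_card_of_injOn (f := fun e => (e.1, ψ e.2 - ψ e.1))
        (s := E1) (t := Finset.univ ×ˢ Finset.Icc 1 k)
        (fun e he => by
          obtain ⟨heE, hek⟩ := Finset.mem_filter.mp he
          have h2 := hE e heE
          simp only [Finset.mem_coe, Finset.mem_product, Finset.mem_univ, Finset.mem_Icc, true_and]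
          omega)
        (fun e he e' he' heq => by
          obtain ⟨heE, hek⟩ := Finset.mem_filter.mp he
          obtain ⟨heE', hek'⟩ := Finset.mem_filter.mp he'
          have h2 := hE e heE
          have h2' := hE e' heE'
          have heq2 : (e.1, ψ e.2 - ψ e.1) = (e'.1, ψ e'.2 - ψ e'.1) := heq
          rw [Prod.mk.injEq] at heq2
          obtain ⟨hfst, hsnd⟩ := heq2
          have hψ1 : ψ e.1 = ψ e'.1 := by rw [hfst]
          have : ψ e.2 = ψ e'.2 := by omega
          have : e.2 = e'.2 := hψinj this
          exact Prod.ext hfst this)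
      calc E1.card ≤ (Finset.univ ×ˢ Finset.Icc 1 k).card := this
        _ = n * k := by
          rw [Finset.card_product, Nat.card_Icc]
          simp
    -- E1 bound
    have hE1sum : (∑ p ∈ E1, (w p : ℝ)) ≤ (W : ℝ) * (n * k) := by
      have h1 : ∑ p ∈ E1, w p ≤ E1.card * W :=
        Finset.sum_le_card_nsmul E1 _ W (fun e he =>
          (hw e (Finset.mem_of_mem_filter e he)).2)
      have h2 : ∑ p ∈ E1, w p ≤ W * (n * k) := by
        calc ∑ p ∈ E1, w p ≤ E1.card * W := h1
          _ ≤ (n * k) * W := Nat.mul_le_mul_right W hcard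
          _ = W * (n * k) := by ring
      calc (∑ p ∈ E1, (w p : ℝ)) = ((∑ p ∈ E1, w p : ℕ) : ℝ) := by push_cast; ring
        _ ≤ (W * (n * k) : ℕ) := by exact_mod_cast h2
        _ = (W : ℝ) * (n * k) := by push_cast; ring
    -- E2 bound
    have hE2sum : ((k:ℤ) + 1) * ∑ p ∈ E2, (w p : ℤ) ≤ (f : ℤ) * n := by
      have h1 : ∀ e ∈ E2, ((k:ℤ) + 1) * (w e : ℤ) ≤ (w e : ℤ) * ((ψ e.2 : ℤ) - ψ e.1) := by
        intro e he
        obtain ⟨heE, hek⟩ := Finset.mem_filter.mp he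
        have h2 := hE e heE
        have h3 : (k:ℤ) + 1 ≤ (ψ e.2 : ℤ) - ψ e.1 := by
          omega
        nlinarith [Int.ofNat_nonneg (w e)]
      calc ((k:ℤ) + 1) * ∑ p ∈ E2, (w p : ℤ) = ∑ p ∈ E2, ((k:ℤ) + 1) * (w p : ℤ) := by
            rw [Finset.mul_sum]
        _ ≤ ∑ p ∈ E2, (w p : ℤ) * ((ψ p.2 : ℤ) - ψ p.1) := Finset.sum_le_sum h1
        _ ≤ ∑ p ∈ E, (w p : ℤ) * ((ψ p.2 : ℤ) - ψ p.1) := by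
            refine Finset.sum_le_sum_of_subset_of_nonneg (Finset.filter_subset _ _) ?_
            intro e he _
            have h2 := hE e he
            nlinarith [Int.ofNat_nonneg (w e)]
        _ ≤ (f : ℤ) * n := KEYLE
    -- real arithmetic
    set r : ℝ := Real.sqrt ((f : ℝ) * W) with hr
    have hr2 : r ^ 2 = (f : ℝ) * W := Real.sq_sqrt (by positivity)
    have hWk : (W : ℝ) * k ≤ r := by
      rw [hr]
      apply Real.le_sqrt_of_sq_le
      have hn1 : (W * k) * (W * k) ≤ f * W := by
        have h1 : k * k ≤ f / W := by
          have := Nat.sqrt_le' (f / W)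
          rw [pow_two] at this
          exact this
        have h2 : W * (f / W) ≤ f := Nat.mul_div_le f W
        calc (W * k) * (W * k) = W * (k * k) * W := by ring
          _ ≤ W * (f / W) * W := by
            exact Nat.mul_le_mul_right W (Nat.mul_le_mul_left W h1)
          _ ≤ f * W := Nat.mul_le_mul_right W h2
      have hn1' : ((W : ℝ) * k) * ((W : ℝ) * k) ≤ (f : ℝ) * W := by exact_mod_cast hn1
      rw [pow_two]
      exact hn1'
    have hfk : (f : ℝ) ≤ ((k:ℝ) + 1) * r := by
      have hn1 : f ≤ (k + 1) * (k + 1) * W := by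
        have h1 : f / W < (k + 1) * (k + 1) := by
          have h := Nat.lt_succ_sqrt (f / W)
          simpa [hk, Nat.succ_eq_add_one] using h
        have h2 := Nat.div_add_mod f W
        have h3 : f % W < W := Nat.mod_lt f (by omega)
        have h4 : f < W * (f / W) + W := by omega
        have h5 : W * (f / W) + W = W * (f / W + 1) := by ring
        have h6 : W * (f / W + 1) ≤ W * ((k + 1) * (k + 1)) :=
          Nat.mul_le_mul_left W (by omega)
        calc f ≤ W * ((k + 1) * (k + 1)) := by omega
          _ = (k + 1) * (k + 1) * W := by ring
      have hn1' : (f : ℝ) ≤ ((k:ℝ) + 1) * ((k:ℝ) + 1) * W := by exact_mod_cast hn1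
      have h6 : ((f:ℝ)) * f ≤ (((k:ℝ) + 1) * ((k:ℝ) + 1) * W) * f :=
        mul_le_mul_of_nonneg_right hn1' (by positivity)
      have hsq : ((f:ℝ))^2 ≤ (((k:ℝ) + 1) * r)^2 := by
        have h7 : (((k:ℝ) + 1) * r)^2 = ((k:ℝ) + 1) * ((k:ℝ) + 1) * ((f:ℝ) * W) := by
          rw [mul_pow, hr2]; ring
        rw [h7, pow_two]
        calc (f:ℝ) * f ≤ (((k:ℝ) + 1) * ((k:ℝ) + 1) * W) * f := h6
          _ = ((k:ℝ) + 1) * ((k:ℝ) + 1) * ((f:ℝ) * W) := by ring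
      have h5 := Real.sqrt_le_sqrt hsq
      rwa [Real.sqrt_sq (by positivity), Real.sqrt_sq (by positivity)] at h5
    have hE2r : (∑ p ∈ E2, (w p : ℝ)) ≤ (n:ℝ) * r := by
      have h1 : ((k:ℝ) + 1) * ∑ p ∈ E2, (w p : ℝ) ≤ (f : ℝ) * n := by
        exact_mod_cast hE2sum
      have h2 : (f : ℝ) * n ≤ ((k:ℝ) + 1) * ((n:ℝ) * r) := by
        calc (f : ℝ) * n ≤ (((k:ℝ) + 1) * r) * n := mul_le_mul_of_nonneg_right hfk hnnn
          _ = ((k:ℝ) + 1) * ((n:ℝ) * r) := by ring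
      have h3 : (0:ℝ) < (k:ℝ) + 1 := by positivity
      exact le_of_mul_le_mul_left (h1.trans h2) h3
    have hE1r : (∑ p ∈ E1, (w p : ℝ)) ≤ (n:ℝ) * r := by
      calc (∑ p ∈ E1, (w p : ℝ)) ≤ (W : ℝ) * (n * k) := hE1sum
        _ = ((W:ℝ) * k) * n := by ring
        _ ≤ r * n := mul_le_mul_of_nonneg_right hWk hnnn
        _ = (n:ℝ) * r := by ring
    rw [hsplit]
    have h9 : (0:ℝ) ≤ (n:ℝ) * r := mul_nonneg hnnn (by rw [hr]; exact hrnn)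
    linarith
end

section
/- Let F = (V, E) be a directed acyclic graph on n vertices whose edge set can be partitioned into f edge-disjoint directed s–t paths. Then |E| ≤ C·n·√f for some universal constant C. -/
section Aux

variable {n : ℕ}

/-- The rank of a vertex in the linear order refining `φ` (ties broken by index). -/
private def rk (φ : Fin n → ℕ) (v : Fin n) : ℕ :=
  (Finset.univ.filter (fun w => φ w < φ v ∨ (φ w = φ v ∧ (w : ℕ) < (v : ℕ)))).card

private lemma rk_lt_rk {φ : Fin n → ℕ} {a b : Fin n}
    (h : φ a < φ b ∨ (φ a = φ b ∧ (a : ℕ) < (b : ℕ))) : rk φ a < rk φ b := by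
  apply Finset.card_lt_card
  constructor
  · intro w hw
    simp only [Finset.mem_filter, Finset.mem_univ, true_and] at hw ⊢
    omega
  · intro hsub
    have ha : a ∈ Finset.univ.filter
        (fun w => φ w < φ a ∨ (φ w = φ a ∧ (w : ℕ) < (a : ℕ))) :=
      hsub (Finset.mem_filter.mpr ⟨Finset.mem_univ a, h⟩)
    simp only [Finset.mem_filter, Finset.mem_univ, true_and] at ha
    omega

private lemma rk_injective (φ : Fin n → ℕ) : Function.Injective (rk φ) := by
  intro a b h
  by_contra hne
  have hv : (a : ℕ) ≠ (b : ℕ) := fun h' => hne (Fin.val_injective h')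
  have h1 : φ a < φ b ∨ (φ a = φ b ∧ (a : ℕ) < (b : ℕ)) ∨ φ b < φ a ∨
      (φ b = φ a ∧ (b : ℕ) < (a : ℕ)) := by omega
  rcases h1 with h1 | h1 | h1 | h1
  · exact absurd h (Nat.ne_of_lt (rk_lt_rk (Or.inl h1)))
  · exact absurd h (Nat.ne_of_lt (rk_lt_rk (Or.inr h1)))
  · exact absurd h.symm (Nat.ne_of_lt (rk_lt_rk (Or.inl h1)))
  · exact absurd h.symm (Nat.ne_of_lt (rk_lt_rk (Or.inr h1)))

private lemma rk_lt (φ : Fin n → ℕ) (v : Fin n) : rk φ v < n := by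
  have hss : (Finset.univ.filter
      (fun w => φ w < φ v ∨ (φ w = φ v ∧ (w : ℕ) < (v : ℕ)))) ⊂ Finset.univ := by
    refine Finset.ssubset_iff_of_subset (Finset.subset_univ _) |>.mpr ⟨v, Finset.mem_univ v, ?_⟩
    simp only [Finset.mem_filter, Finset.mem_univ, true_and]
    omega
  have := Finset.card_lt_card hss
  simpa [rk] using this

/-- Along a walk with strictly increasing `ψ`, the number of edges with jump `≥ L`,
times `L`, is bounded by the total increase. -/
private lemma walk_bound (ψ : Fin n → ℕ) (L : ℕ) :
    ∀ (l : List (Fin n)) (a : Fin n),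
      (∀ p ∈ walkEdges (a :: l), ψ p.1 < ψ p.2) →
      L * (walkEdges (a :: l)).countP (fun p => decide (L ≤ ψ p.2 - ψ p.1)) + ψ a
        ≤ ψ ((a :: l).getLast (List.cons_ne_nil a l)) := by
  intro l
  induction l with
  | nil => intro a _; simp [walkEdges]
  | cons b l ih =>
    intro a h
    have hedge : walkEdges (a :: b :: l) = (a, b) :: walkEdges (b :: l) := by
      simp [walkEdges]
    have hab : ψ a < ψ b := h (a, b) (by rw [hedge]; exact List.mem_cons_self)
    have hrest : ∀ p ∈ walkEdges (b :: l), ψ p.1 < ψ p.2 :=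
      fun p hp => h p (by rw [hedge]; exact List.mem_cons_of_mem _ hp)
    have ihb := ih b hrest
    rw [hedge, List.countP_cons, List.getLast_cons (List.cons_ne_nil b l)]
    set c := (walkEdges (b :: l)).countP (fun p => decide (L ≤ ψ p.2 - ψ p.1)) with hc
    by_cases hcase : L ≤ ψ b - ψ a
    · rw [if_pos (by simpa using hcase)]
      have hmul : L * (c + 1) = L * c + L := by ring
      omega
    · rw [if_neg (by simpa using hcase), Nat.add_zero]
      omega

private lemma sum_count_eq_countP {α : Type*} [DecidableEq α] [BEq α] [LawfulBEq α]
    (S : Finset α) (l : List α) :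
    ∑ p ∈ S, l.count p = l.countP (fun x => decide (x ∈ S)) := by
  induction l with
  | nil => simp
  | cons a l ih =>
    rw [List.countP_cons, ← ih]
    simp only [List.count_cons, beq_iff_eq]
    rw [Finset.sum_add_distrib]
    congr 1
    by_cases h : a ∈ S <;> simp [Finset.sum_ite_eq, h]

end Aux

/-- If a directed acyclic graph `E` on `n` vertices has its edge set
exactly partitioned into `f` edge-disjoint directed `s`–`t` paths, then
`|E| ≤ C · n · √f` for a universal constant `C`. -/
theorem flow_cover :
    ∃ C : ℝ, 0 < C ∧
      ∀ (n f : ℕ) (E : Finset (Fin n × Fin n))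
        (s t : Fin n) (φ : Fin n → ℕ) (paths : Fin f → List (Fin n)),
        (∀ p ∈ E, φ p.1 < φ p.2) →
        (∀ i, (paths i).head? = some s ∧ (paths i).getLast? = some t) →
        (∀ i, ∀ p ∈ walkEdges (paths i), p ∈ E) →
        (∀ p ∈ E, (∑ i, (walkEdges (paths i)).count p) = 1) →
        (E.card : ℝ) ≤ C * n * Real.sqrt f := by
  refine ⟨2, by norm_num, ?_⟩
  intro n f E s t φ paths hφ hst hmem hcount
  rcases Nat.eq_zero_or_pos f with hf | hf
  · subst hf
    have hE : E = ∅ := by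
      rw [Finset.eq_empty_iff_forall_notMem]
      intro p hp
      have := hcount p hp
      simp at this
    rw [hE]
    simp
  -- main case : f ≥ 1
  set ψ := rk φ with hψdef
  set L := Nat.sqrt f + 1 with hLdef
  have hψE : ∀ p ∈ E, ψ p.1 < ψ p.2 := fun p hp => rk_lt_rk (Or.inl (hφ p hp))
  set Eshort := E.filter (fun p => ψ p.2 - ψ p.1 < L) with hEs
  set Elong := E.filter (fun p => ¬ (ψ p.2 - ψ p.1 < L)) with hEl
  have hsplit : Eshort.card + Elong.card = E.card :=
    Finset.card_filter_add_card_filter_not _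
  -- short edges
  have hshort : Eshort.card ≤ n * Nat.sqrt f := by
    have hcard : Eshort.card ≤ ((Finset.univ : Finset (Fin n)) ×ˢ Finset.Ico 1 L).card := by
      apply Finset.card_le_card_of_injOn (fun p => (p.1, ψ p.2 - ψ p.1))
      · intro p hp
        simp only [hEs, Finset.coe_filter, Set.mem_setOf_eq] at hp
        have h1 := hψE p hp.1
        exact Finset.mem_product.mpr ⟨Finset.mem_univ _, Finset.mem_Ico.mpr ⟨by show 1 ≤ ψ p.2 - ψ p.1; omega, hp.2⟩⟩
      · intro p hp q hq heq
        simp only [hEs, Finset.coe_filter, Set.mem_setOf_eq] at hp hq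
        have h1 := hψE p hp.1
        have h2 := hψE q hq.1
        have heq' : (p.1, ψ p.2 - ψ p.1) = (q.1, ψ q.2 - ψ q.1) := heq
        obtain ⟨e1, e2⟩ := Prod.mk.inj heq'
        have e3 : ψ p.1 = ψ q.1 := congrArg ψ e1
        have e4 : ψ p.2 = ψ q.2 := by omega
        have e5 : p.2 = q.2 := rk_injective φ e4
        exact Prod.ext e1 e5
    have : ((Finset.univ : Finset (Fin n)) ×ˢ Finset.Ico 1 L).card = n * Nat.sqrt f := by
      rw [Finset.card_product]
      simp [hLdef]
    omega
  -- long edges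
  have hper : ∀ i, L * (walkEdges (paths i)).countP (fun x => decide (x ∈ Elong)) ≤ n := by
    intro i
    obtain ⟨hh, _⟩ := hst i
    cases hpi : paths i with
    | nil => rw [hpi] at hh; simp at hh
    | cons a l =>
      have hmono : ∀ p ∈ walkEdges (a :: l), ψ p.1 < ψ p.2 :=
        fun p hp => hψE p (hmem i p (by rw [hpi]; exact hp))
      have hb := walk_bound ψ L l a hmono
      have hmonoC : (walkEdges (a :: l)).countP (fun x => decide (x ∈ Elong))
          ≤ (walkEdges (a :: l)).countP (fun p => decide (L ≤ ψ p.2 - ψ p.1)) := by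
        apply List.countP_mono_left
        intro x _ hx
        simp only [decide_eq_true_eq] at hx ⊢
        rw [hEl, Finset.mem_filter] at hx
        omega
      have hlast : ψ ((a :: l).getLast (List.cons_ne_nil a l)) < n := rk_lt φ _
      have hmul : L * (walkEdges (a :: l)).countP (fun x => decide (x ∈ Elong))
          ≤ L * (walkEdges (a :: l)).countP (fun p => decide (L ≤ ψ p.2 - ψ p.1)) :=
        Nat.mul_le_mul_left _ hmonoC
      omega
  have hlongcard : Elong.card
      = ∑ i, (walkEdges (paths i)).countP (fun x => decide (x ∈ Elong)) := by
    calc Elong.card = ∑ _p ∈ Elong, 1 := Finset.card_eq_sum_ones _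
      _ = ∑ p ∈ Elong, ∑ i, (walkEdges (paths i)).count p := by
          refine Finset.sum_congr rfl fun p hp => ?_
          rw [hEl, Finset.mem_filter] at hp
          exact (hcount p hp.1).symm
      _ = ∑ i, ∑ p ∈ Elong, (walkEdges (paths i)).count p := Finset.sum_comm
      _ = ∑ i, (walkEdges (paths i)).countP (fun x => decide (x ∈ Elong)) :=
          Finset.sum_congr rfl fun i _ => sum_count_eq_countP _ _
  have hlong : L * Elong.card ≤ f * n := by
    rw [hlongcard, Finset.mul_sum]
    calc ∑ i, L * (walkEdges (paths i)).countP (fun x => decide (x ∈ Elong))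
        ≤ ∑ _i : Fin f, n := Finset.sum_le_sum fun i _ => hper i
      _ = f * n := by simp [mul_comm]
  -- pass to the reals
  have hsf_pos : (0:ℝ) < Real.sqrt f := Real.sqrt_pos.mpr (by exact_mod_cast hf)
  have hnat_sqrt : (Nat.sqrt f : ℝ) ≤ Real.sqrt f := Real.nat_sqrt_le_real_sqrt
  have hshortR : (Eshort.card : ℝ) ≤ n * Real.sqrt f := by
    calc (Eshort.card : ℝ) ≤ (n : ℝ) * (Nat.sqrt f : ℝ) := by exact_mod_cast hshort
      _ ≤ n * Real.sqrt f := mul_le_mul_of_nonneg_left hnat_sqrt (by positivity)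
  have hLR : Real.sqrt f ≤ (L : ℝ) := by
    have h1 : (f : ℝ) ≤ (L : ℝ) * (L : ℝ) := by
      exact_mod_cast (Nat.lt_succ_sqrt f).le
    calc Real.sqrt f ≤ Real.sqrt ((L:ℝ) * (L:ℝ)) := Real.sqrt_le_sqrt h1
      _ = (L : ℝ) := Real.sqrt_mul_self (by positivity)
  have hsq : Real.sqrt f * Real.sqrt f = (f : ℝ) := Real.mul_self_sqrt (by positivity)
  have hlongR : (Elong.card : ℝ) ≤ n * Real.sqrt f := by
    have h1 : Real.sqrt f * (Elong.card : ℝ) ≤ (f : ℝ) * n := by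
      calc Real.sqrt f * (Elong.card : ℝ) ≤ (L : ℝ) * (Elong.card : ℝ) :=
            mul_le_mul_of_nonneg_right hLR (by positivity)
        _ ≤ (f : ℝ) * n := by exact_mod_cast hlong
    have h3 : (Elong.card : ℝ) ≤ (f : ℝ) * n / Real.sqrt f := by
      rw [le_div_iff₀ hsf_pos]
      linarith
    have h4 : (f : ℝ) * n / Real.sqrt f = n * Real.sqrt f := by
      rw [div_eq_iff hsf_pos.ne']
      nlinarith [hsq]
    linarith [h3, h4.le]
  have hEcard : (E.card : ℝ) = (Eshort.card : ℝ) + (Elong.card : ℝ) := by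
    exact_mod_cast hsplit.symm
  rw [hEcard]
  calc (Eshort.card : ℝ) + (Elong.card : ℝ) ≤ n * Real.sqrt f + n * Real.sqrt f :=
        add_le_add hshortR hlongR
    _ = 2 * n * Real.sqrt f := by ring
end

section
/- Let G be an undirected unweighted graph with terminals s and t, and let F ⪯ G be a flow subgraph of value ν(F). Then for every partition (S, T) of the vertices with s ∈ S and t ∈ T, the number of edges of G crossing the cut equals ν(F) + w_{G_F}(S, T), where w_{G_F}(S,T) is the total weight of edges of the residual graph G_F directed (or undirected) from S to T. -/
open Finset

/-- The capacity function of the residual graph `G_F`: undirected unit edges of `G \ F`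
(in both directions), together with the reverse of each edge of `F` with weight `2`. -/
def residualCap {V : Type*} [DecidableEq V] (cG : V → V → ℕ) (F : Finset (V × V))
    (a b : V) : ℕ :=
  (if cG a b = 1 ∧ (a, b) ∉ F ∧ (b, a) ∉ F then 1 else 0) + (if (b, a) ∈ F then 2 else 0)

private lemma sum_count_eq {α : Type*} [DecidableEq α] [BEq α] [LawfulBEq α]
    (s : Finset α) (l : List α) :
    ∑ p ∈ s, l.count p = l.countP (fun p => decide (p ∈ s)) := by
  induction l with
  | nil => simp
  | cons a l ih =>
    simp only [List.count_cons, List.countP_cons, Finset.sum_add_distrib, ih]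
    congr 1
    simp [beq_iff_eq]

private lemma tele {V : Type*} [DecidableEq V] (S : Finset V) :
    ∀ (l : List V) (a : V),
      (walkEdges (a :: l)).countP (fun p => decide (p.1 ∈ S ∧ p.2 ∉ S)) +
        (if (a :: l).getLast (by simp) ∈ S then 1 else 0) =
      (walkEdges (a :: l)).countP (fun p => decide (p.1 ∉ S ∧ p.2 ∈ S)) +
        (if a ∈ S then 1 else 0)
  | [], a => by by_cases h : a ∈ S <;> simp [walkEdges, h]
  | b :: l, a => by
    have ih := tele S l b
    have hwe : walkEdges (a :: b :: l) = (a, b) :: walkEdges (b :: l) := by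
      simp [walkEdges]
    rw [hwe, List.countP_cons, List.countP_cons, List.getLast_cons (by simp)]
    by_cases ha : a ∈ S <;> by_cases hb : b ∈ S <;> simp [ha, hb] at ih ⊢ <;> omega

private lemma sum_ite_mem {V : Type*} [DecidableEq V] (A B : Finset V) (F : Finset (V × V)) :
    (∑ a ∈ A, ∑ b ∈ B, if (a, b) ∈ F then 1 else 0) =
      (F.filter (fun p => p.1 ∈ A ∧ p.2 ∈ B)).card := by
  rw [← Finset.sum_product']
  have h : ((A ×ˢ B).filter (fun p => p ∈ F)) = F.filter (fun p => p.1 ∈ A ∧ p.2 ∈ B) := by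
    ext p; simp [Finset.mem_product]; tauto
  rw [← h, Finset.card_filter]

/-- Let `G` be undirected and unweighted (symmetric `{0,1}` capacity
function `cG`) and let `F ⪯ G` be a flow subgraph of value `ν(F) = f` (its edges decompose
exactly into `f` edge-disjoint directed `s`–`t` paths).  Then for every `s`–`t` cut
`(S, Sᶜ)`, the number of edges of `G` crossing the cut equals `f` plus the total residual
weight `w_{G_F}(S, Sᶜ)` directed from `S` to `Sᶜ`. -/
theorem cut_value_via_residual {V : Type*} [Fintype V] [DecidableEq V] (s t : V)
    (cG : V → V → ℕ) (hsym : ∀ a b, cG a b = cG b a) (h01 : ∀ a b, cG a b ≤ 1)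
    (hloop : ∀ a, cG a a = 0)
    (F : Finset (V × V))
    (hFG : ∀ p ∈ F, cG p.1 p.2 = 1) (hFor : ∀ p ∈ F, (p.2, p.1) ∉ F)
    (f : ℕ) (paths : Fin f → List V)
    (hwalk : ∀ i, (paths i).head? = some s ∧ (paths i).getLast? = some t)
    (hmem : ∀ i, ∀ p ∈ walkEdges (paths i), p ∈ F)
    (hdecomp : ∀ p ∈ F, (∑ i, (walkEdges (paths i)).count p) = 1) :
    ∀ S : Finset V, s ∈ S → t ∉ S →
      (∑ a ∈ S, ∑ b ∈ Sᶜ, cG a b) = f + ∑ a ∈ S, ∑ b ∈ Sᶜ, residualCap cG F a b := by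
  intro S hs ht
  -- counting the crossing edges of F in each direction via a generic filter-card formula
  have hcard : ∀ (P : V × V → Prop) [DecidablePred P],
      (F.filter P).card = ∑ i, (walkEdges (paths i)).countP (fun p => decide (P p)) := by
    intro P _
    have h1 : (F.filter P).card = ∑ p ∈ F.filter P, ∑ i, (walkEdges (paths i)).count p := by
      rw [Finset.card_eq_sum_ones]
      exact Finset.sum_congr rfl fun p hp => (hdecomp p (Finset.mem_filter.mp hp).1).symm
    rw [h1, Finset.sum_comm]
    refine Finset.sum_congr rfl fun i _ => ?_
    rw [sum_count_eq]
    refine List.countP_congr fun p hp => ?_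
    simp only [decide_eq_true_eq, Finset.mem_filter]
    have := hmem i p hp
    tauto
  -- per-path crossing count identity
  have hpath : ∀ i,
      (walkEdges (paths i)).countP (fun p => decide (p.1 ∈ S ∧ p.2 ∉ S)) =
      (walkEdges (paths i)).countP (fun p => decide (p.1 ∉ S ∧ p.2 ∈ S)) + 1 := by
    intro i
    obtain ⟨hh, hl⟩ := hwalk i
    obtain ⟨l, hpl⟩ : ∃ l, paths i = s :: l := by
      cases hp : paths i with
      | nil => rw [hp] at hh; simp at hh
      | cons a l => rw [hp] at hh; simp at hh; exact ⟨l, by rw [hh]⟩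
    rw [hpl] at hl ⊢
    have h2 := tele S l s
    have hlast : (s :: l).getLast (by simp) = t := by
      rw [List.getLast?_eq_getLast (by simp : s :: l ≠ [])] at hl
      exact Option.some.inj hl
    rw [hlast] at h2
    simp only [if_pos hs, if_neg ht] at h2
    omega
  -- the key flow identity: forward F-edges = f + backward F-edges
  have hkey : (F.filter (fun p => p.1 ∈ S ∧ p.2 ∈ Sᶜ)).card =
      f + (F.filter (fun p => p.1 ∈ Sᶜ ∧ p.2 ∈ S)).card := by
    have e1 : (F.filter (fun p => p.1 ∈ S ∧ p.2 ∈ Sᶜ)).card =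
        ∑ i, (walkEdges (paths i)).countP (fun p => decide (p.1 ∈ S ∧ p.2 ∉ S)) := by
      rw [hcard]; congr 1; ext p; simp
    have e2 : (F.filter (fun p => p.1 ∈ Sᶜ ∧ p.2 ∈ S)).card =
        ∑ i, (walkEdges (paths i)).countP (fun p => decide (p.1 ∉ S ∧ p.2 ∈ S)) := by
      rw [hcard]; congr 1; ext p; simp
    rw [e1, e2]
    calc ∑ i, (walkEdges (paths i)).countP (fun p => decide (p.1 ∈ S ∧ p.2 ∉ S))
        = ∑ i, ((walkEdges (paths i)).countP (fun p => decide (p.1 ∉ S ∧ p.2 ∈ S)) + 1) :=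
          Finset.sum_congr rfl fun i _ => hpath i
      _ = f + ∑ i, (walkEdges (paths i)).countP (fun p => decide (p.1 ∉ S ∧ p.2 ∈ S)) := by
          rw [Finset.sum_add_distrib]; simp [add_comm]
  -- decompose the capacity pointwise
  have hsplit : ∀ a b, cG a b =
      (if (a, b) ∈ F then 1 else 0) + (if (b, a) ∈ F then 1 else 0) +
      (if cG a b = 1 ∧ (a, b) ∉ F ∧ (b, a) ∉ F then 1 else 0) := by
    intro a b
    by_cases h1 : (a, b) ∈ F
    · have h2 : (b, a) ∉ F := hFor (a, b) h1
      have := hFG (a, b) h1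
      simp_all
    · by_cases h2 : (b, a) ∈ F
      · have := hFG (b, a) h2
        have hcab : cG a b = 1 := by rw [hsym]; exact this
        simp_all
      · have := h01 a b
        interval_cases h : cG a b <;> simp_all
  have hres : ∀ a b, residualCap cG F a b =
      (if cG a b = 1 ∧ (a, b) ∉ F ∧ (b, a) ∉ F then 1 else 0) +
      2 * (if (b, a) ∈ F then 1 else 0) := by
    intro a b
    unfold residualCap
    by_cases h : (b, a) ∈ F <;> simp [h]
  -- expand both sides as sums of indicators
  have lhs_eq : (∑ a ∈ S, ∑ b ∈ Sᶜ, cG a b) =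
      (∑ a ∈ S, ∑ b ∈ Sᶜ, if (a, b) ∈ F then 1 else 0) +
      (∑ a ∈ S, ∑ b ∈ Sᶜ, if (b, a) ∈ F then 1 else 0) +
      (∑ a ∈ S, ∑ b ∈ Sᶜ, if cG a b = 1 ∧ (a, b) ∉ F ∧ (b, a) ∉ F then 1 else 0) := by
    simp_rw [← Finset.sum_add_distrib]
    exact Finset.sum_congr rfl fun a _ => Finset.sum_congr rfl fun b _ => hsplit a b
  have rhs_eq : (∑ a ∈ S, ∑ b ∈ Sᶜ, residualCap cG F a b) =
      (∑ a ∈ S, ∑ b ∈ Sᶜ, if cG a b = 1 ∧ (a, b) ∉ F ∧ (b, a) ∉ F then 1 else 0) +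
      2 * (∑ a ∈ S, ∑ b ∈ Sᶜ, if (b, a) ∈ F then 1 else 0) := by
    simp_rw [Finset.mul_sum, ← Finset.sum_add_distrib]
    exact Finset.sum_congr rfl fun a _ => Finset.sum_congr rfl fun b _ => hres a b
  have fwd_eq : (∑ a ∈ S, ∑ b ∈ Sᶜ, if (a, b) ∈ F then 1 else 0) =
      (F.filter (fun p => p.1 ∈ S ∧ p.2 ∈ Sᶜ)).card := sum_ite_mem S Sᶜ F
  have bwd_eq : (∑ a ∈ S, ∑ b ∈ Sᶜ, if (b, a) ∈ F then 1 else 0) =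
      (F.filter (fun p => p.1 ∈ Sᶜ ∧ p.2 ∈ S)).card := by
    rw [Finset.sum_comm]
    exact sum_ite_mem Sᶜ S F
  rw [lhs_eq, rhs_eq, fwd_eq, bwd_eq]
  omega
end

section
/- Let P be a k-forest packing of an undirected unweighted graph G, i.e., P = F₁ ∪ … ∪ F_k where each F_i is a spanning forest of G \ (F₁ ∪ … ∪ F_{i−1}). Then for every cut (S,T): (a) if |E_G(S,T)| ≤ k then E_P(S,T) = E_G(S,T); and (b) if |E_G(S,T)| ≥ k+1 then |E_P(S,T)| ≥ k. -/
open Finset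

variable {V : Type*} [Fintype V] [DecidableEq V]

open scoped Classical in
/-- The number of edges of `H` crossing the partition `(S, Sᶜ)`. -/
noncomputable def crossCount (H : SimpleGraph V) (S : Finset V) : ℕ :=
  ∑ a ∈ S, ∑ b ∈ Sᶜ, if H.Adj a b then 1 else 0

/-- `F` is a spanning forest of `G`: a maximal acyclic subgraph, equivalently an acyclic
subgraph such that the endpoints of every edge of `G` are connected in `F`. -/
def IsSpanningForestOf (F G : SimpleGraph V) : Prop :=
  F ≤ G ∧ F.IsAcyclic ∧ ∀ a b, G.Adj a b → F.Reachable a b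

/-- `P` is a `k`-forest packing of `G`: `P = F₁ ∪ … ∪ F_k` where each `F_i` is a spanning
forest of `G` minus the previously chosen forests. -/
def IsKForestPacking (k : ℕ) (G P : SimpleGraph V) : Prop :=
  ∃ F : Fin k → SimpleGraph V,
    P = (⨆ i, F i) ∧
    ∀ i : Fin k, IsSpanningForestOf (F i) (G \ ⨆ j : Fin k, ⨆ _ : j < i, F j)

lemma crossCount_le_of_adj {H H' : SimpleGraph V} {S : Finset V}
    (h : ∀ a b, a ∈ S → b ∈ Sᶜ → H.Adj a b → H'.Adj a b) :
    crossCount H S ≤ crossCount H' S := by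
  classical
  unfold crossCount
  refine Finset.sum_le_sum fun a ha => Finset.sum_le_sum fun b hb => ?_
  by_cases h1 : H.Adj a b
  · simp [h1, h a b ha hb h1]
  · simp [h1]

lemma crossCount_lt_of_adj {H H' : SimpleGraph V} {S : Finset V}
    (h : ∀ a b, a ∈ S → b ∈ Sᶜ → H.Adj a b → H'.Adj a b)
    {a b : V} (ha : a ∈ S) (hb : b ∈ Sᶜ) (hadj : H'.Adj a b) (hn : ¬ H.Adj a b) :
    crossCount H S < crossCount H' S := by
  classical
  unfold crossCount
  rw [← Finset.sum_product', ← Finset.sum_product']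
  refine Finset.sum_lt_sum (fun p hp => ?_) ⟨(a, b), ?_, ?_⟩
  · simp only [Finset.mem_product] at hp
    by_cases h1 : H.Adj p.1 p.2
    · simp [h1, h p.1 p.2 hp.1 hp.2 h1]
    · simp [h1]
  · simp [ha, hb]
  · simp [hadj, hn]

lemma pref_adj {k : ℕ} (F : Fin k → SimpleGraph V) (m : ℕ) (a b : V) :
    (⨆ j : Fin k, ⨆ _ : (j : ℕ) < m, F j).Adj a b ↔
      ∃ j : Fin k, (j : ℕ) < m ∧ (F j).Adj a b := by
  simp [SimpleGraph.iSup_adj]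

lemma key {k : ℕ} (G : SimpleGraph V) (F : Fin k → SimpleGraph V)
    (hF : ∀ i : Fin k, IsSpanningForestOf (F i) (G \ ⨆ j : Fin k, ⨆ _ : j < i, F j))
    (S : Finset V) (i : ℕ) (hi : i ≤ k) :
    (∀ a b, a ∈ S → b ∈ Sᶜ → G.Adj a b →
      (⨆ j : Fin k, ⨆ _ : (j : ℕ) < i, F j).Adj a b) ∨
    i ≤ crossCount (⨆ j : Fin k, ⨆ _ : (j : ℕ) < i, F j) S := by
  induction i with
  | zero => right; exact Nat.zero_le _
  | succ i ih =>
    have hik : i < k := hi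
    set ι : Fin k := ⟨i, hik⟩ with hι
    have hmono : ∀ a b, (⨆ j : Fin k, ⨆ _ : (j : ℕ) < i, F j).Adj a b →
        (⨆ j : Fin k, ⨆ _ : (j : ℕ) < i + 1, F j).Adj a b := by
      intro a b hab
      rw [pref_adj] at hab ⊢
      obtain ⟨j, hj, hadj⟩ := hab
      exact ⟨j, Nat.lt_succ_of_lt hj, hadj⟩
    have hpref_eq : (⨆ j : Fin k, ⨆ _ : j < ι, F j)
        = ⨆ j : Fin k, ⨆ _ : (j : ℕ) < i, F j := by
      congr 1
    rcases ih (le_of_lt hi) with hall | hc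
    · left
      intro a b ha hb hadj
      exact hmono a b (hall a b ha hb hadj)
    · by_cases hex : ∃ a b, a ∈ S ∧ b ∈ Sᶜ ∧ G.Adj a b ∧
          ¬ (⨆ j : Fin k, ⨆ _ : (j : ℕ) < i, F j).Adj a b
      · right
        obtain ⟨a, b, ha, hb, hadj, hnp⟩ := hex
        have hGi : (G \ ⨆ j : Fin k, ⨆ _ : j < ι, F j).Adj a b := by
          rw [SimpleGraph.sdiff_adj, hpref_eq]
          exact ⟨hadj, hnp⟩
        obtain ⟨w⟩ := (hF ι).2.2 a b hGi
        obtain ⟨d, hd, hdS, hdS'⟩ := w.exists_boundary_dart (↑S)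
          (by simpa using ha) (by simpa using (Finset.mem_compl.mp hb))
        have hdadj : (F ι).Adj d.toProd.1 d.toProd.2 := d.adj
        have hdnot : ¬ (⨆ j : Fin k, ⨆ _ : (j : ℕ) < i, F j).Adj d.toProd.1 d.toProd.2 := by
          intro hcon
          have := (hF ι).1 hdadj
          rw [SimpleGraph.sdiff_adj, hpref_eq] at this
          exact this.2 hcon
        have hdnew : (⨆ j : Fin k, ⨆ _ : (j : ℕ) < i + 1, F j).Adj d.toProd.1 d.toProd.2 := by
          rw [pref_adj]
          exact ⟨ι, Nat.lt_succ_self i, hdadj⟩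
        have := crossCount_lt_of_adj (fun a b _ _ h => hmono a b h) (by simpa using hdS)
          (Finset.mem_compl.mpr (by simpa using hdS')) hdnew hdnot
        omega
      · left
        push_neg at hex
        intro a b ha hb hadj
        exact hmono a b (hex a b ha hb hadj)

/-- Let `P` be a `k`-forest packing of `G`.  For every cut `(S, Sᶜ)`:
(a) if `|E_G(S,Sᶜ)| ≤ k` then `E_P(S,Sᶜ) = E_G(S,Sᶜ)`; and (b) if `|E_G(S,Sᶜ)| ≥ k+1`
then `|E_P(S,Sᶜ)| ≥ k`. -/
theorem kforest_packing_cut (G : SimpleGraph V) (k : ℕ) (P : SimpleGraph V)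
    (hP : IsKForestPacking k G P) (S : Finset V) :
    (crossCount G S ≤ k → ∀ a b, a ∈ S → b ∉ S → (G.Adj a b ↔ P.Adj a b)) ∧
    (k + 1 ≤ crossCount G S → k ≤ crossCount P S) := by
  obtain ⟨F, rfl, hF⟩ := hP
  have hPadj : ∀ a b, (⨆ j : Fin k, ⨆ _ : (j : ℕ) < k, F j).Adj a b ↔
      (⨆ i, F i).Adj a b := by
    intro a b
    rw [pref_adj, SimpleGraph.iSup_adj]
    exact ⟨fun ⟨j, _, h⟩ => ⟨j, h⟩, fun ⟨j, h⟩ => ⟨j, j.isLt, h⟩⟩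
  have hPG : ∀ a b, (⨆ i, F i).Adj a b → G.Adj a b := by
    intro a b hab
    rw [SimpleGraph.iSup_adj] at hab
    obtain ⟨j, hj⟩ := hab
    exact ((hF j).1 hj).1
  have hkey := key G F hF S k le_rfl
  constructor
  · intro hle a b ha hb
    have hbc : b ∈ Sᶜ := Finset.mem_compl.mpr hb
    rcases hkey with hall | hc
    · exact ⟨fun h => (hPadj a b).mp (hall a b ha hbc h), fun h => hPG a b h⟩
    · -- crossCount P = crossCount G here
      have h1 : crossCount (⨆ i, F i) S ≤ crossCount G S :=
        crossCount_le_of_adj (fun a b _ _ h => hPG a b h)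
      have h2 : k ≤ crossCount (⨆ i, F i) S := by
        calc k ≤ crossCount (⨆ j : Fin k, ⨆ _ : (j : ℕ) < k, F j) S := hc
        _ ≤ crossCount (⨆ i, F i) S :=
          crossCount_le_of_adj (fun a b _ _ h => (hPadj a b).mp h)
      constructor
      · intro hG
        by_contra hnP
        have := crossCount_lt_of_adj (fun a b _ _ h => hPG a b h) ha hbc hG hnP
        omega
      · exact fun h => hPG a b h
  · intro hge
    rcases hkey with hall | hc
    · have h1 : crossCount G S ≤ crossCount (⨆ i, F i) S :=
        crossCount_le_of_adj (fun a b ha hb h => (hPadj a b).mp (hall a b ha hb h))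
      omega
    · calc k ≤ crossCount (⨆ j : Fin k, ⨆ _ : (j : ℕ) < k, F j) S := hc
      _ ≤ crossCount (⨆ i, F i) S :=
        crossCount_le_of_adj (fun a b _ _ h => (hPadj a b).mp h)
end

section
/- Let G = G_A ∪ G_B be an undirected unweighted graph on vertex set V with terminals s,t, let F be an explicitly given directed weighted graph on V, and set 𝒢 = (G_A ∪ G_B) ∪ F as a mixed graph. Let k ≥ ν(𝒢) + 1, let P_A, P_B be k-forest packings of G_A, G_B respectively, and set 𝒫 = (P_A ∪ P_B) ∪ F. Then ν(𝒢) = ν(𝒫), and a cut (S,T) is a minimum s–t cut of 𝒢 if and only if it is a minimum s–t cut of 𝒫. -/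
set_option linter.unusedSectionVars false


open Finset

variable {V : Type*} [Fintype V] [DecidableEq V]

/-- The value of the cut `(S, Sᶜ)` in the mixed graph consisting of the undirected
unweighted graph `G` and the directed weighted graph `F`: undirected crossing edges
count with weight `1`, and directed edges from `S` to `Sᶜ` count with their weights. -/
noncomputable def mixedCutVal (G : SimpleGraph V) (F : V → V → ℕ) (S : Finset V) : ℕ :=
  crossCount G S + ∑ a ∈ S, ∑ b ∈ Sᶜ, F a b

/-- The minimum `s`–`t` cut value of the mixed graph `(G, F)`. -/
noncomputable def minCutVal (G : SimpleGraph V) (F : V → V → ℕ) (s t : V) : ℕ :=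
  sInf {w | ∃ S : Finset V, s ∈ S ∧ t ∉ S ∧ mixedCutVal G F S = w}

open scoped Classical in
lemma crossCount_eq_card (H : SimpleGraph V) (S : Finset V) :
    crossCount H S = ((S ×ˢ Sᶜ).filter fun p => H.Adj p.1 p.2).card := by
  rw [crossCount, Finset.card_filter, Finset.sum_product]

lemma crossCount_le_of {H H' : SimpleGraph V} {S : Finset V}
    (h : ∀ a ∈ S, ∀ b ∈ Sᶜ, H.Adj a b → H'.Adj a b) :
    crossCount H S ≤ crossCount H' S := by
  classical
  unfold crossCount
  refine Finset.sum_le_sum fun a ha => Finset.sum_le_sum fun b hb => ?_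
  by_cases hH : H.Adj a b
  · simp [hH, h a ha b hb hH]
  · simp [hH]

lemma packing_le {k : ℕ} {G P : SimpleGraph V} (hP : IsKForestPacking k G P) : P ≤ G := by
  obtain ⟨F, rfl, hF⟩ := hP
  exact iSup_le fun i => (hF i).1.trans sdiff_le

lemma crossCount_ge_of_missing {k : ℕ} {G P : SimpleGraph V} (hP : IsKForestPacking k G P)
    {S : Finset V} {a b : V} (ha : a ∈ S) (hb : b ∈ Sᶜ) (hG : G.Adj a b) (hnP : ¬P.Adj a b) :
    k ≤ crossCount P S := by
  classical
  obtain ⟨F, rfl, hF⟩ := hP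
  have hFle : ∀ i : Fin k, F i ≤ ⨆ i, F i := fun i => le_iSup F i
  have hprev : ∀ i : Fin k, (⨆ j : Fin k, ⨆ _ : j < i, F j) ≤ ⨆ i, F i :=
    fun i => iSup_le fun j => iSup_le fun _ => hFle j
  have hreach : ∀ i : Fin k, (F i).Reachable a b := by
    intro i
    refine (hF i).2.2 a b ?_
    rw [SimpleGraph.sdiff_adj]
    exact ⟨hG, fun h => hnP (hprev i h)⟩
  have hcross : ∀ i : Fin k, ∃ x y : V, x ∈ S ∧ y ∈ Sᶜ ∧ (F i).Adj x y := by
    intro i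
    obtain ⟨p⟩ := hreach i
    obtain ⟨d, _, hdS, hdT⟩ := p.exists_boundary_dart (↑S : Set V) (by simpa using ha)
      (by simpa using (Finset.mem_compl.mp hb))
    exact ⟨d.fst, d.snd, by simpa using hdS, Finset.mem_compl.mpr (by simpa using hdT), d.adj⟩
  choose x y hx hy hadj using hcross
  have hdisj : ∀ {i j : Fin k}, j < i → ¬ (F j).Adj (x i) (y i) := by
    intro i j hji hadjj
    have := ((hF i).1 (hadj i))
    rw [SimpleGraph.sdiff_adj] at this
    exact this.2 (SimpleGraph.iSup_adj.mpr ⟨j, SimpleGraph.iSup_adj.mpr ⟨hji, hadjj⟩⟩)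
  have hinj : Set.InjOn (fun i : Fin k => (x i, y i)) ↑(Finset.univ : Finset (Fin k)) := by
    intro i _ j _ heq
    by_contra hne
    have h1 : x i = x j := congrArg Prod.fst heq
    have h2 : y i = y j := congrArg Prod.snd heq
    rcases Ne.lt_or_gt hne with h | h
    · exact hdisj h (h1 ▸ h2 ▸ hadj i)
    · exact hdisj h (h1 ▸ h2 ▸ hadj j)
  have hmaps : ∀ i ∈ (Finset.univ : Finset (Fin k)),
      (x i, y i) ∈ (S ×ˢ Sᶜ).filter fun p => (⨆ i, F i).Adj p.1 p.2 := by
    intro i _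
    simp only [Finset.mem_filter, Finset.mem_product]
    exact ⟨⟨hx i, hy i⟩, hFle i (hadj i)⟩
  calc k = (Finset.univ : Finset (Fin k)).card := by simp
    _ ≤ ((S ×ˢ Sᶜ).filter fun p => (⨆ i, F i).Adj p.1 p.2).card :=
        Finset.card_le_card_of_injOn _ hmaps hinj
    _ = crossCount (⨆ i, F i) S := (crossCount_eq_card _ _).symm

lemma mixed_key {k : ℕ} {GA GB PA PB : SimpleGraph V} (F : V → V → ℕ)
    (hPA : IsKForestPacking k GA PA) (hPB : IsKForestPacking k GB PB) (S : Finset V) :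
    min k (mixedCutVal (GA ⊔ GB) F S) ≤ mixedCutVal (PA ⊔ PB) F S := by
  by_cases hall : ∀ a ∈ S, ∀ b ∈ Sᶜ, (GA ⊔ GB).Adj a b → (PA ⊔ PB).Adj a b
  · exact le_trans (min_le_right _ _) (add_le_add_left (crossCount_le_of hall) _)
  · push_neg at hall
    obtain ⟨a, ha, b, hb, hG, hnP⟩ := hall
    rw [SimpleGraph.sup_adj _ _ _ _] at hnP
    push_neg at hnP
    have hcc : k ≤ crossCount (PA ⊔ PB) S := by
      rcases (SimpleGraph.sup_adj _ _ _ _).mp hG with h | h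
      · exact le_trans (crossCount_ge_of_missing hPA ha hb h hnP.1)
          (crossCount_le_of fun a _ b _ h => (SimpleGraph.sup_adj _ _ _ _).mpr (Or.inl h))
      · exact le_trans (crossCount_ge_of_missing hPB ha hb h hnP.2)
          (crossCount_le_of fun a _ b _ h => (SimpleGraph.sup_adj _ _ _ _).mpr (Or.inr h))
    exact le_trans (min_le_left _ _) (le_trans hcc (Nat.le_add_right _ _))

/-- Let `𝒢 = (G_A ∪ G_B) ∪ F` be a mixed graph, `k ≥ ν(𝒢) + 1`, and
`P_A, P_B` be `k`-forest packings of `G_A, G_B`.  Set `𝒫 = (P_A ∪ P_B) ∪ F`.  Then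
`ν(𝒢) = ν(𝒫)` and an `s`–`t` cut is minimum in `𝒢` iff it is minimum in `𝒫`. -/
theorem forest_packing_preserves_mincut (s t : V)
    (GA GB : SimpleGraph V) (F : V → V → ℕ) (k : ℕ)
    (hk : minCutVal (GA ⊔ GB) F s t + 1 ≤ k)
    (PA PB : SimpleGraph V)
    (hPA : IsKForestPacking k GA PA) (hPB : IsKForestPacking k GB PB) :
    minCutVal (GA ⊔ GB) F s t = minCutVal (PA ⊔ PB) F s t ∧
    ∀ S : Finset V, s ∈ S → t ∉ S →
      (mixedCutVal (GA ⊔ GB) F S = minCutVal (GA ⊔ GB) F s t ↔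
        mixedCutVal (PA ⊔ PB) F S = minCutVal (PA ⊔ PB) F s t) := by
  have hmono : ∀ S : Finset V, mixedCutVal (PA ⊔ PB) F S ≤ mixedCutVal (GA ⊔ GB) F S := by
    intro S
    refine add_le_add_left (crossCount_le_of fun a _ b _ h => ?_) _
    rcases (SimpleGraph.sup_adj _ _ _ _).mp h with h | h
    · exact (SimpleGraph.sup_adj _ _ _ _).mpr (Or.inl (packing_le hPA h))
    · exact (SimpleGraph.sup_adj _ _ _ _).mpr (Or.inr (packing_le hPB h))
  have hkey := mixed_key F hPA hPB
  by_cases hst : s = t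
  · subst hst
    have hempty : ∀ (H : SimpleGraph V),
        {w | ∃ S : Finset V, s ∈ S ∧ s ∉ S ∧ mixedCutVal H F S = w} = ∅ := by
      intro H
      rw [Set.eq_empty_iff_forall_notMem]
      rintro w ⟨S, h1, h2, -⟩
      exact h2 h1
    constructor
    · rw [minCutVal, minCutVal, hempty, hempty]
    · intro S hS hT
      exact absurd hS hT
  · have hne : ∀ (H : SimpleGraph V),
        {w | ∃ S : Finset V, s ∈ S ∧ t ∉ S ∧ mixedCutVal H F S = w}.Nonempty := by
      intro H
      exact ⟨_, {s}, Finset.mem_singleton_self s, by simp [Ne.symm hst], rfl⟩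
    have hlowG : ∀ S : Finset V, s ∈ S → t ∉ S →
        minCutVal (GA ⊔ GB) F s t ≤ mixedCutVal (GA ⊔ GB) F S :=
      fun S h1 h2 => Nat.sInf_le ⟨S, h1, h2, rfl⟩
    have hlowP : ∀ S : Finset V, s ∈ S → t ∉ S →
        minCutVal (PA ⊔ PB) F s t ≤ mixedCutVal (PA ⊔ PB) F S :=
      fun S h1 h2 => Nat.sInf_le ⟨S, h1, h2, rfl⟩
    have hS0 : ∃ S : Finset V, s ∈ S ∧ t ∉ S ∧
        mixedCutVal (GA ⊔ GB) F S = minCutVal (GA ⊔ GB) F s t := Nat.sInf_mem (hne _)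
    have hS1 : ∃ S : Finset V, s ∈ S ∧ t ∉ S ∧
        mixedCutVal (PA ⊔ PB) F S = minCutVal (PA ⊔ PB) F s t := Nat.sInf_mem (hne _)
    obtain ⟨S0, hS0s, hS0t, hS0v⟩ := hS0
    obtain ⟨S1, hS1s, hS1t, hS1v⟩ := hS1
    have h1 : minCutVal (PA ⊔ PB) F s t ≤ minCutVal (GA ⊔ GB) F s t := by
      calc minCutVal (PA ⊔ PB) F s t ≤ mixedCutVal (PA ⊔ PB) F S0 := hlowP S0 hS0s hS0t
        _ ≤ mixedCutVal (GA ⊔ GB) F S0 := hmono S0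
        _ = minCutVal (GA ⊔ GB) F s t := hS0v
    have h2 : minCutVal (GA ⊔ GB) F s t ≤ minCutVal (PA ⊔ PB) F s t := by
      have ha := hkey S1
      have hb := hlowG S1 hS1s hS1t
      rw [hS1v] at ha
      rcases min_le_iff.mp ha with h | h
      · omega
      · omega
    have heq : minCutVal (GA ⊔ GB) F s t = minCutVal (PA ⊔ PB) F s t := le_antisymm h2 h1
    refine ⟨heq, fun S hSs hSt => ?_⟩
    have hm := hmono S
    have hkS := hkey S
    have hlG := hlowG S hSs hSt
    constructor
    · intro hG
      have hmin : min k (mixedCutVal (GA ⊔ GB) F S) = mixedCutVal (GA ⊔ GB) F S :=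
        min_eq_right (by omega)
      rw [← heq]
      omega
    · intro hP
      rw [← heq] at hP
      rw [hP] at hkS
      rcases min_le_iff.mp hkS with h | h
      · omega
      · omega
end

section
/- An ℓ-assignment is a sequence A = ((p₁,q₁),…,(p_ℓ,q_ℓ)) with each (p_i,q_i) ∈ {1,2,3} × {1,2} and p_i ≠ p_{i+1} for all i. A pair (i,j) ∈ [ℓ]² is matched by A if p_i = p_j and q_i ≠ q_j. Then there exists a set of t = O(log ℓ) assignments such that every pair (i,j) with |i−j| ≥ 2 is matched by at least one assignment in the set. -/
/-- Gray code of `n`. -/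
def gray (n : ℕ) : ℕ := n ^^^ (n >>> 1)

/-- `k`-th bit of the Gray code of `n`. -/
def gb (k n : ℕ) : Bool := (gray n).testBit k

/-- The `p`-part of our assignments. -/
def pf (ty k n : ℕ) : Fin 3 :=
  if ty = 0 then (if n % 2 = 0 then 0 else 1)
  else if n % 2 = 0 then (if gb k (n / 2) then 1 else 0)
  else if gb k (n / 2) = gb k (n / 2 + 1) then (if gb k (n / 2) then 0 else 1)
  else 2

/-- The `q`-part of our assignments. -/
def qf (ty k n : ℕ) : Fin 2 :=
  if ty = 0 then (if (gray n).testBit k then 1 else 0)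
  else (if gb k (n / 2) then 1 else 0)

lemma shiftRight_xor (x y : ℕ) : (x ^^^ y) >>> 1 = (x >>> 1) ^^^ (y >>> 1) := by
  apply Nat.eq_of_testBit_eq
  intro i
  simp [Nat.testBit_shiftRight, Nat.testBit_xor]

lemma gray_inj {m n : ℕ} (h : gray m = gray n) : m = n := by
  have hx : (m ^^^ n) = (m ^^^ n) >>> 1 := by
    apply Nat.eq_of_testBit_eq
    intro i
    have hb : (gray m).testBit i = (gray n).testBit i := by rw [h]
    simp only [gray, Nat.testBit_xor, Nat.testBit_shiftRight] at hb ⊢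
    revert hb
    cases m.testBit i <;> cases n.testBit i <;>
      cases m.testBit (1 + i) <;> cases n.testBit (1 + i) <;> decide
  rw [Nat.shiftRight_one] at hx
  have : m ^^^ n = 0 := by omega
  exact xor_eq_zero_iff.mp this

lemma xor_succ (n : ℕ) : ∃ s, n ^^^ (n + 1) = 2 ^ (s + 1) - 1 := by
  induction n using Nat.strong_induction_on with
  | _ n ih =>
    rcases Nat.even_or_odd n with ⟨m, hm⟩ | ⟨m, hm⟩
    · refine ⟨0, ?_⟩
      apply Nat.eq_of_testBit_eq
      intro i
      have h1 : n = 2 * m := by omega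
      have h2 : n + 1 = 2 * m + 1 := by omega
      cases i with
      | zero =>
        have f1 : n % 2 = 0 := by omega
        have f2 : (n + 1) % 2 = 1 := by omega
        rw [Nat.testBit_xor, Nat.testBit_zero, Nat.testBit_zero, Nat.testBit_zero, f1, f2]
        decide
      | succ i =>
        have e1 : n / 2 = m := by omega
        have e2 : (n + 1) / 2 = m := by omega
        rw [Nat.testBit_xor, Nat.testBit_add_one, Nat.testBit_add_one, Nat.testBit_add_one,
          e1, e2]
        simp
    · have hmn : m < n := by omega
      obtain ⟨s, hs⟩ := ih m hmn
      refine ⟨s + 1, ?_⟩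
      have key : n ^^^ (n + 1) = 2 * (m ^^^ (m + 1)) + 1 := by
        apply Nat.eq_of_testBit_eq
        intro i
        cases i with
        | zero =>
          have h1 : n % 2 = 1 := by omega
          have h2 : (n + 1) % 2 = 0 := by omega
          have h3 : (2 * (m ^^^ (m + 1)) + 1) % 2 = 1 := by omega
          rw [Nat.testBit_xor, Nat.testBit_zero, Nat.testBit_zero, Nat.testBit_zero,
            h1, h2, h3]
          decide
        | succ i =>
          have e1 : n / 2 = m := by omega
          have e2 : (n + 1) / 2 = m + 1 := by omega
          have e3 : (2 * (m ^^^ (m + 1)) + 1) / 2 = m ^^^ (m + 1) := by omega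
          rw [Nat.testBit_xor, Nat.testBit_add_one, Nat.testBit_add_one, Nat.testBit_add_one,
            e1, e2, e3, Nat.testBit_xor]
      rw [key, hs]
      have h2p : 2 ≤ 2 ^ (s + 1) := Nat.one_lt_two_pow (by omega)
      have : (2:ℕ) ^ (s + 1 + 1) = 2 * 2 ^ (s + 1) := by ring
      omega

lemma gray_succ (n : ℕ) : ∃ s, gray n ^^^ gray (n + 1) = 2 ^ s := by
  obtain ⟨s, hs⟩ := xor_succ n
  refine ⟨s, ?_⟩
  have h1 : gray n ^^^ gray (n + 1)
      = (n ^^^ (n + 1)) ^^^ ((n ^^^ (n + 1)) >>> 1) := by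
    rw [shiftRight_xor]
    apply Nat.eq_of_testBit_eq
    intro i
    simp only [gray, Nat.testBit_xor, Nat.testBit_shiftRight]
    cases n.testBit i <;> cases (n+1).testBit i <;>
      cases n.testBit (1 + i) <;> cases (n+1).testBit (1 + i) <;> decide
  rw [h1, hs]
  have hhalf : (2 ^ (s + 1) - 1) >>> 1 = 2 ^ s - 1 := by
    rw [Nat.shiftRight_one]
    have : (2:ℕ) ^ (s + 1) = 2 * 2 ^ s := by ring
    omega
  rw [hhalf]
  apply Nat.eq_of_testBit_eq
  intro i
  rw [Nat.testBit_xor, Nat.testBit_two_pow_sub_one, Nat.testBit_two_pow_sub_one,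
    Nat.testBit_two_pow]
  by_cases h1 : i < s
  · have h2 : i < s + 1 := by omega
    have h3 : ¬ (s = i) := by omega
    simp [h1, h2, h3]
  · by_cases h4 : i = s
    · subst h4
      simp
    · have h5 : ¬ i < s + 1 := by omega
      have h3 : ¬ (s = i) := by omega
      simp [h1, h5, h3]

lemma eq_two_pow_of_bits {D s : ℕ} (hD : D ≠ 0) (h : ∀ k, D.testBit k = true → k = s) :
    D = 2 ^ s := by
  have hs : D.testBit s = true := by
    by_contra hf
    apply hD
    apply Nat.eq_of_testBit_eq
    intro i
    rw [Nat.zero_testBit]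
    by_cases his : i = s
    · subst his; simpa using hf
    · by_contra hc
      exact his (h i (by simpa using hc))
  apply Nat.eq_of_testBit_eq
  intro i
  rw [Nat.testBit_two_pow]
  by_cases his : i = s
  · subst his; simp [hs]
  · have hfb : D.testBit i = false := by
      by_contra hc
      exact his (h i (by simpa using hc))
    have hsi : ¬ (s = i) := fun hh => his hh.symm
    simp [hfb, hsi]

lemma exists_bit {N D : ℕ} (hD : D ≠ 0) (hlt : D < 2 ^ N) :
    ∃ k, k < N ∧ D.testBit k = true := by
  obtain ⟨k, hk, _⟩ := Nat.exists_most_significant_bit hD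
  refine ⟨k, ?_, hk⟩
  by_contra hc
  have : D < 2 ^ k := lt_of_lt_of_le hlt (Nat.pow_le_pow_right (by norm_num) (by omega))
  rw [Nat.testBit_lt_two_pow this] at hk
  exact Bool.false_ne_true hk

lemma gray_lt {N x : ℕ} (hx : x < 2 ^ N) : gray x < 2 ^ N := by
  have h2 : x >>> 1 < 2 ^ N := by
    rw [Nat.shiftRight_one]; omega
  have := Nat.xor_lt_two_pow (n := N) hx h2
  simpa [gray] using this

lemma testBit_xor_ne {x y k : ℕ} (h : (x ^^^ y).testBit k = true) :
    x.testBit k ≠ y.testBit k := by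
  rw [Nat.testBit_xor] at h
  revert h
  cases x.testBit k <;> cases y.testBit k <;> decide

/-- Coverage of same-parity pairs. -/
lemma same_parity_cov {N i j : ℕ} (hi : i < 2 ^ N) (hj : j < 2 ^ N) (hij : i ≠ j) :
    ∃ k, k < N ∧ (gray i).testBit k ≠ (gray j).testBit k := by
  have hD : gray i ^^^ gray j ≠ 0 := by
    intro h
    exact hij (gray_inj (xor_eq_zero_iff.mp h))
  obtain ⟨k, hkN, hk⟩ := exists_bit hD (Nat.xor_lt_two_pow (gray_lt hi) (gray_lt hj))
  exact ⟨k, hkN, testBit_xor_ne hk⟩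

/-- Coverage of mixed-parity pairs: key combinatorial lemma. -/
lemma mixed_cov {N a b : ℕ} (ha : a < 2 ^ N) (hb : b < 2 ^ N) (h1 : a ≠ b) (h2 : a ≠ b + 1) :
    ∃ k, k < N ∧ gb k a ≠ gb k b ∧ gb k b = gb k (b + 1) := by
  obtain ⟨s, hs⟩ := gray_succ b
  have hD : gray a ^^^ gray b ≠ 0 := by
    intro h
    exact h1 (gray_inj (xor_eq_zero_iff.mp h))
  have hne : ∃ k, (gray a ^^^ gray b).testBit k = true ∧ k ≠ s := by
    by_contra hc
    push_neg at hc
    have : gray a ^^^ gray b = 2 ^ s := eq_two_pow_of_bits hD hc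
    apply h2
    apply gray_inj
    have e1 : gray a = gray b ^^^ (gray a ^^^ gray b) := by
      rw [Nat.xor_comm (gray a) (gray b), ← Nat.xor_assoc, Nat.xor_self, Nat.zero_xor]
    have e2 : gray (b + 1) = gray b ^^^ (gray b ^^^ gray (b + 1)) := by
      rw [← Nat.xor_assoc, Nat.xor_self, Nat.zero_xor]
    rw [e1, e2, this, hs]
  obtain ⟨k, hk, hks⟩ := hne
  have hkN : k < N := by
    by_contra hc
    have hlt : gray a ^^^ gray b < 2 ^ k :=
      lt_of_lt_of_le (Nat.xor_lt_two_pow (gray_lt ha) (gray_lt hb))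
        (Nat.pow_le_pow_right (by norm_num) (by omega))
    rw [Nat.testBit_lt_two_pow hlt] at hk
    exact Bool.false_ne_true hk
  refine ⟨k, hkN, testBit_xor_ne hk, ?_⟩
  have hbit : (gray b ^^^ gray (b + 1)).testBit k = false := by
    rw [hs, Nat.testBit_two_pow]
    have : ¬ (s = k) := fun h => hks h.symm
    simp [this]
  rw [Nat.testBit_xor] at hbit
  revert hbit
  unfold gb
  cases (gray b).testBit k <;> cases (gray (b + 1)).testBit k <;> decide

lemma ite_fin2_ne {b1 b2 : Bool} (h : b1 ≠ b2) :
    (if b1 then (1 : Fin 2) else 0) ≠ (if b2 then 1 else 0) := by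
  cases b1 <;> cases b2 <;> simp_all

lemma ite_fin3_match {b1 b2 : Bool} (h : b1 ≠ b2) :
    (if b1 then (1 : Fin 3) else 0) = (if b2 then 0 else 1) := by
  cases b1 <;> cases b2 <;> simp_all

lemma pf0_eval (k n : ℕ) : pf 0 k n = (if n % 2 = 0 then 0 else 1) := by simp [pf]

lemma pf1_even {n : ℕ} (k : ℕ) (h : n % 2 = 0) :
    pf 1 k n = (if gb k (n / 2) then 1 else 0) := by simp [pf, h]

lemma pf1_odd {n : ℕ} (k : ℕ) (h : n % 2 = 1) :
    pf 1 k n = (if gb k (n / 2) = gb k (n / 2 + 1) then (if gb k (n / 2) then 0 else 1)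
      else 2) := by simp [pf, h]

lemma qf0_eval (k n : ℕ) : qf 0 k n = (if (gray n).testBit k then 1 else 0) := by simp [qf]

lemma qf1_eval (k n : ℕ) : qf 1 k n = (if gb k (n / 2) then 1 else 0) := by simp [qf]

/-- Properness (adjacent entries get different `p`). -/
lemma pf_adj (ty k n : ℕ) : pf ty k n ≠ pf ty k (n + 1) := by
  rcases Nat.even_or_odd n with ⟨m, hm⟩ | ⟨m, hm⟩
  · have h1 : n % 2 = 0 := by omega
    have h2 : (n + 1) % 2 = 1 := by omega
    have e1 : n / 2 = m := by omega
    have e2 : (n + 1) / 2 = m := by omega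
    by_cases hty : ty = 0
    · simp [pf, hty, h1, h2]
    · simp only [pf, hty, if_neg hty, h1, h2, e1, e2, if_pos rfl]
      norm_num
      cases hA : gb k m <;> cases hB : gb k (m + 1) <;> simp [hA, hB]
  · have h1 : n % 2 = 1 := by omega
    have h2 : (n + 1) % 2 = 0 := by omega
    have e1 : n / 2 = m := by omega
    have e2 : (n + 1) / 2 = m + 1 := by omega
    by_cases hty : ty = 0
    · simp [pf, hty, h1, h2]
    · simp only [pf, hty, if_neg hty, h1, h2, e1, e2]
      norm_num
      cases hA : gb k m <;> cases hB : gb k (m + 1) <;> simp [hA, hB]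

/-- An `ℓ`-assignment: a sequence `((p₁,q₁),…,(p_ℓ,q_ℓ))` with each `(p_i,q_i)` in
`{1,2,3} × {1,2}` and `p_i ≠ p_{i+1}` for all consecutive `i`. -/
def IsAssignment (ℓ : ℕ) (A : Fin ℓ → Fin 3 × Fin 2) : Prop :=
  ∀ i : ℕ, ∀ h : i + 1 < ℓ, (A ⟨i, by omega⟩).1 ≠ (A ⟨i + 1, h⟩).1

/-- There is a universal constant `C` such that for every `ℓ ≥ 1` there
exists a family of `t ≤ C·log ℓ` assignments such that every pair `(i,j)` with
`|i − j| ≥ 2` is matched (i.e. `p_i = p_j` and `q_i ≠ q_j`) by at least one assignment. -/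
theorem assignments_match_far_pairs :
    ∃ C : ℝ, 0 < C ∧
      ∀ ℓ : ℕ, 0 < ℓ →
        ∃ (t : ℕ) (𝒜 : Fin t → Fin ℓ → Fin 3 × Fin 2),
          (t : ℝ) ≤ C * Real.log ℓ ∧
          (∀ a, IsAssignment ℓ (𝒜 a)) ∧
          ∀ i j : Fin ℓ, ((i : ℕ) + 2 ≤ (j : ℕ) ∨ (j : ℕ) + 2 ≤ (i : ℕ)) →
            ∃ a, (𝒜 a i).1 = (𝒜 a j).1 ∧ (𝒜 a i).2 ≠ (𝒜 a j).2 := by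
  refine ⟨24, by norm_num, ?_⟩
  intro ℓ hℓ
  by_cases hℓ1 : ℓ = 1
  · subst hℓ1
    refine ⟨0, fun a _ => (0, 0), by simp, fun a => a.elim0, ?_⟩
    intro i j hfar
    exfalso
    have hi := i.isLt
    have hj := j.isLt
    omega
  · have hℓ2 : 2 ≤ ℓ := by omega
    set N := Nat.size ℓ with hN
    refine ⟨2 * N, fun a i => (pf ((a : ℕ) / N) ((a : ℕ) % N) (i : ℕ),
      qf ((a : ℕ) / N) ((a : ℕ) % N) (i : ℕ)), ?_, ?_, ?_⟩
    · -- size bound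
      have hN1 : 1 ≤ N := Nat.size_pos.mpr hℓ
      have hpow : 2 ^ (N - 1) ≤ ℓ := by
        by_contra h
        push_neg at h
        have := Nat.size_le.mpr h
        omega
      have hlog : ((N : ℝ) - 1) * Real.log 2 ≤ Real.log ℓ := by
        have h1 : ((2:ℝ)) ^ (N - 1) ≤ (ℓ : ℝ) := by exact_mod_cast hpow
        have h2 : Real.log ((2:ℝ) ^ (N - 1)) ≤ Real.log ℓ :=
          Real.log_le_log (by positivity) h1
        rw [Real.log_pow] at h2
        have h3 : ((N - 1 : ℕ) : ℝ) = (N : ℝ) - 1 := by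
          push_cast [Nat.cast_sub hN1]; ring
        rw [h3] at h2
        exact h2
      have hl2 : (0.6931471803 : ℝ) < Real.log 2 := Real.log_two_gt_d9
      have hll : Real.log 2 ≤ Real.log ℓ := by
        apply Real.log_le_log (by norm_num)
        exact_mod_cast hℓ2
      have hN0 : (0:ℝ) ≤ (N : ℝ) - 1 := by
        have : (1:ℝ) ≤ (N:ℝ) := by exact_mod_cast hN1
        linarith
      push_cast
      nlinarith [mul_le_mul_of_nonneg_left hl2.le hN0]
    · intro a
      intro i h
      exact pf_adj _ _ i
    · intro i j hfar
      have hsz : ℓ < 2 ^ N := Nat.lt_size_self ℓ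
      have hiN : (i : ℕ) < 2 ^ N := lt_of_lt_of_le i.isLt (le_of_lt hsz)
      have hjN : (j : ℕ) < 2 ^ N := lt_of_lt_of_le j.isLt (le_of_lt hsz)
      have hN1 : 1 ≤ N := Nat.size_pos.mpr hℓ
      rcases Nat.mod_two_eq_zero_or_one (i : ℕ) with hi2 | hi2 <;>
        rcases Nat.mod_two_eq_zero_or_one (j : ℕ) with hj2 | hj2
      · -- both even
        obtain ⟨k, hkN, hk⟩ := same_parity_cov hiN hjN (by omega)
        refine ⟨⟨k, by omega⟩, ?_, ?_⟩
        · show pf (k / N) (k % N) (i : ℕ) = pf (k / N) (k % N) (j : ℕ)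
          rw [Nat.div_eq_of_lt hkN, Nat.mod_eq_of_lt hkN, pf0_eval, pf0_eval, hi2, hj2]
        · show qf (k / N) (k % N) (i : ℕ) ≠ qf (k / N) (k % N) (j : ℕ)
          rw [Nat.div_eq_of_lt hkN, Nat.mod_eq_of_lt hkN, qf0_eval, qf0_eval]
          exact ite_fin2_ne hk
      · -- i even, j odd
        have ha : (i : ℕ) / 2 < 2 ^ N := lt_of_le_of_lt (Nat.div_le_self _ 2) hiN
        have hb : (j : ℕ) / 2 < 2 ^ N := lt_of_le_of_lt (Nat.div_le_self _ 2) hjN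
        obtain ⟨k, hkN, hk1, hk2⟩ := mixed_cov ha hb (by omega) (by omega)
        have ed : (N + k) / N = 1 := by
          rw [Nat.add_comm, Nat.add_div_right _ (by omega)]
          simp [Nat.div_eq_of_lt hkN]
        have em : (N + k) % N = k := by
          rw [Nat.add_mod_left, Nat.mod_eq_of_lt hkN]
        refine ⟨⟨N + k, by omega⟩, ?_, ?_⟩
        · show pf ((N + k) / N) ((N + k) % N) (i : ℕ)
            = pf ((N + k) / N) ((N + k) % N) (j : ℕ)
          rw [ed, em, pf1_even k hi2, pf1_odd k hj2, if_pos hk2]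
          exact ite_fin3_match hk1
        · show qf ((N + k) / N) ((N + k) % N) (i : ℕ)
            ≠ qf ((N + k) / N) ((N + k) % N) (j : ℕ)
          rw [ed, em, qf1_eval, qf1_eval]
          exact ite_fin2_ne hk1
      · -- i odd, j even
        have ha : (j : ℕ) / 2 < 2 ^ N := lt_of_le_of_lt (Nat.div_le_self _ 2) hjN
        have hb : (i : ℕ) / 2 < 2 ^ N := lt_of_le_of_lt (Nat.div_le_self _ 2) hiN
        obtain ⟨k, hkN, hk1, hk2⟩ := mixed_cov ha hb (by omega) (by omega)
        have ed : (N + k) / N = 1 := by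
          rw [Nat.add_comm, Nat.add_div_right _ (by omega)]
          simp [Nat.div_eq_of_lt hkN]
        have em : (N + k) % N = k := by
          rw [Nat.add_mod_left, Nat.mod_eq_of_lt hkN]
        refine ⟨⟨N + k, by omega⟩, ?_, ?_⟩
        · show pf ((N + k) / N) ((N + k) % N) (i : ℕ)
            = pf ((N + k) / N) ((N + k) % N) (j : ℕ)
          rw [ed, em, pf1_odd k hi2, pf1_even k hj2, if_pos hk2]
          exact (ite_fin3_match hk1).symm
        · show qf ((N + k) / N) ((N + k) % N) (i : ℕ)
            ≠ qf ((N + k) / N) ((N + k) % N) (j : ℕ)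
          rw [ed, em, qf1_eval, qf1_eval]
          exact (ite_fin2_ne hk1).symm
      · -- both odd
        obtain ⟨k, hkN, hk⟩ := same_parity_cov hiN hjN (by omega)
        refine ⟨⟨k, by omega⟩, ?_, ?_⟩
        · show pf (k / N) (k % N) (i : ℕ) = pf (k / N) (k % N) (j : ℕ)
          rw [Nat.div_eq_of_lt hkN, Nat.mod_eq_of_lt hkN, pf0_eval, pf0_eval, hi2, hj2]
        · show qf (k / N) (k % N) (i : ℕ) ≠ qf (k / N) (k % N) (j : ℕ)
          rw [Nat.div_eq_of_lt hkN, Nat.mod_eq_of_lt hkN, qf0_eval, qf0_eval]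
          exact ite_fin2_ne hk
end

section
/- Let G be an undirected weighted graph on n vertices such that no vertex subset U induces a subgraph G[U] with global minimum cut value at least k (i.e., G contains no k-connected component). Then the total edge weight of G satisfies w(G) ≤ k(n−1). -/
open Finset

theorem aux_weight_bound {V : Type*} [Fintype V] [DecidableEq V]
    (w : V → V → ℝ) (hsymm : ∀ a b, w a b = w b a) (hnn : ∀ a b, 0 ≤ w a b)
    (hdiag : ∀ a, w a a = 0) (k : ℝ)
    (hno : ∀ U : Finset V, 2 ≤ U.card →
      ∃ A ⊆ U, A.Nonempty ∧ (U \ A).Nonempty ∧ (∑ a ∈ A, ∑ b ∈ U \ A, w a b) < k) :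
    ∀ U : Finset V, U.Nonempty →
      (1 / 2) * (∑ a ∈ U, ∑ b ∈ U, w a b) ≤ k * (U.card - 1) := by
  intro U
  induction U using Finset.strongInduction with
  | _ U IH =>
    intro hU
    by_cases hc : U.card ≤ 1
    · have h1 : U.card = 1 := le_antisymm hc (Finset.card_pos.mpr hU)
      obtain ⟨a, ha⟩ := Finset.card_eq_one.mp h1
      subst ha
      simp [hdiag]
    · push_neg at hc
      obtain ⟨A, hAU, hA, hB, hcut⟩ := hno U hc
      set B := U \ A with hBdef
      have hdisj : Disjoint A B := Finset.disjoint_sdiff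
      have hUsplit : A ∪ B = U := Finset.union_sdiff_of_subset hAU
      have hAss : A ⊂ U := (Finset.ssubset_iff_of_subset hAU).mpr
        (by obtain ⟨x, hx⟩ := hB; exact ⟨x, (Finset.mem_sdiff.mp hx).1, (Finset.mem_sdiff.mp hx).2⟩)
      have hBss : B ⊂ U := Finset.sdiff_ssubset hAU hA
      have IHA := IH A hAss hA
      have IHB := IH B hBss hB
      have hcard : B.card + A.card = U.card := Finset.card_sdiff_add_card_eq_card hAU
      have hsplit : (∑ a ∈ U, ∑ b ∈ U, w a b) =
          (∑ a ∈ A, ∑ b ∈ A, w a b) + (∑ a ∈ B, ∑ b ∈ B, w a b)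
          + 2 * (∑ a ∈ A, ∑ b ∈ B, w a b) := by
        have hcross : (∑ a ∈ B, ∑ b ∈ A, w a b) = (∑ a ∈ A, ∑ b ∈ B, w a b) := by
          rw [Finset.sum_comm]
          exact Finset.sum_congr rfl fun a _ => Finset.sum_congr rfl fun b _ => (hsymm a b).symm
        rw [← hUsplit, Finset.sum_union hdisj]
        simp_rw [Finset.sum_union hdisj]
        rw [Finset.sum_add_distrib, Finset.sum_add_distrib, hcross]
        ring
      have hcutnn : 0 ≤ ∑ a ∈ A, ∑ b ∈ B, w a b :=
        Finset.sum_nonneg fun a _ => Finset.sum_nonneg fun b _ => hnn a b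
      have hkpos : 0 < k := lt_of_le_of_lt hcutnn hcut
      have hcardR : (B.card : ℝ) + A.card = U.card := by exact_mod_cast hcard
      rw [hsplit]
      nlinarith [hcut, IHA, IHB]

/-- Let `G` be an undirected weighted graph on `n ≥ 1` vertices
(symmetric nonnegative weight function `w` with zero diagonal) containing no
`k`-connected component: every vertex subset `U` with `|U| ≥ 2` admits a cut of its
induced subgraph `G[U]` of total weight less than `k`.  Then the total edge weight of
`G` is at most `k·(n − 1)`. -/
theorem no_k_connected_component_weight_bound {V : Type*} [Fintype V] [DecidableEq V]
    [Nonempty V]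
    (w : V → V → ℝ) (hsymm : ∀ a b, w a b = w b a) (hnn : ∀ a b, 0 ≤ w a b)
    (hdiag : ∀ a, w a a = 0) (k : ℝ)
    (hno : ∀ U : Finset V, 2 ≤ U.card →
      ∃ A ⊆ U, A.Nonempty ∧ (U \ A).Nonempty ∧ (∑ a ∈ A, ∑ b ∈ U \ A, w a b) < k) :
    (1 / 2) * (∑ a, ∑ b, w a b) ≤ k * (Fintype.card V - 1) := by
  have h := aux_weight_bound w hsymm hnn hdiag k hno Finset.univ Finset.univ_nonempty
  simpa [Finset.card_univ] using h
end

section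
/- Fix 0 < ε < 1/5. Let 𝒢 be a graph with terminals s,t, let H satisfy (1−ε)w_𝒢(S,T) ≤ w_H(S,T) ≤ (1+ε)w_𝒢(S,T) for all cuts (S,T), let ℱ ⪯ H be a maximum s–t flow subgraph of H, and let K ⪯ H \ ℱ. Suppose (S,T) is an s–t cut with w_K(S,T) ≥ 3ε·ν(H). Then w_𝒢(S,T) ≥ (1−ε)²(1+3ε)·ν(𝒢) > ν(𝒢); in particular, (S,T) is not a minimum s–t cut of 𝒢. -/
/-- Fix `0 < ε < 1/5`.  Let `w𝒢, wH, wF, wK` be the `s`–`t` cut-value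
functions of the graphs `𝒢`, `H`, a maximum `s`–`t` flow subgraph `ℱ ⪯ H`, and
`K ⪯ H \ ℱ` respectively, with minimum `s`–`t` cut values `νG` (of `𝒢`, positive) and
`νH` (of `H`).  Suppose `H` is a `(1 ± ε)`-cut approximation of `𝒢`, every `s`–`t` cut of
`ℱ` has value at least `νH` (since `ℱ` is a maximum flow of `H`), and `ℱ` and `K` are
edge-disjoint subgraphs of `H` (so `wF + wK ≤ wH` on every cut).  If `(S₀, S₀ᶜ)` is an
`s`–`t` cut with `wK(S₀) ≥ 3ε·νH`, then
`w𝒢(S₀) ≥ (1−ε)²(1+3ε)·νG > νG`; in particular `(S₀, S₀ᶜ)` is not a minimum `s`–`t`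
cut of `𝒢`. -/
theorem large_K_cut_not_minimum {V : Type*} (s t : V) (ε : ℝ)
    (hε0 : 0 < ε) (hε5 : ε < 1 / 5)
    (wG wH wF wK : Finset V → ℝ) (νG νH : ℝ)
    (hνG : IsLeast {x | ∃ S : Finset V, s ∈ S ∧ t ∉ S ∧ wG S = x} νG)
    (hνH : IsLeast {x | ∃ S : Finset V, s ∈ S ∧ t ∉ S ∧ wH S = x} νH)
    (hνGpos : 0 < νG)
    (hsp : ∀ S : Finset V, s ∈ S → t ∉ S →
      (1 - ε) * wG S ≤ wH S ∧ wH S ≤ (1 + ε) * wG S)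
    (hflow : ∀ S : Finset V, s ∈ S → t ∉ S → νH ≤ wF S)
    (hdisj : ∀ S : Finset V, s ∈ S → t ∉ S → wF S + wK S ≤ wH S)
    (S₀ : Finset V) (hs : s ∈ S₀) (ht : t ∉ S₀)
    (hK : 3 * ε * νH ≤ wK S₀) :
    (1 - ε) ^ 2 * (1 + 3 * ε) * νG ≤ wG S₀ ∧ νG < wG S₀ := by
  obtain ⟨⟨Sh, hsh, hth, hwh⟩, -⟩ := hνH
  have hGlb : νG ≤ wG Sh := hνG.2 ⟨Sh, hsh, hth, rfl⟩
  have h1 : (1 - ε) * wG Sh ≤ νH := hwh ▸ (hsp Sh hsh hth).1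
  have hνH1 : (1 - ε) * νG ≤ νH := by nlinarith
  have h2 : wH S₀ ≤ (1 + ε) * wG S₀ := (hsp S₀ hs ht).2
  have h3 : νH ≤ wF S₀ := hflow S₀ hs ht
  have h4 : wF S₀ + wK S₀ ≤ wH S₀ := hdisj S₀ hs ht
  have hνHpos : 0 ≤ νH := by nlinarith
  have hA : (1 + 3 * ε) * νH ≤ (1 + ε) * wG S₀ := by linarith
  have hB : (1 - ε) * (1 + 3 * ε) * νG ≤ (1 + ε) * wG S₀ := by nlinarith
  have key : (1 - ε) ^ 2 * (1 + 3 * ε) * νG ≤ wG S₀ := by nlinarith [mul_pos hε0 hνGpos, mul_pos (mul_pos hε0 hε0) hνGpos, mul_pos (mul_pos (mul_pos hε0 hε0) hε0) hνGpos]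
  refine ⟨key, lt_of_lt_of_le ?_ key⟩
  nlinarith [mul_pos hε0 hνGpos, mul_pos (mul_pos hε0 hε0) hνGpos, mul_pos (mul_pos (mul_pos hε0 hε0) hε0) hνGpos]
end
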